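/- Let (B,C) be a precontact algebra, let (X,T) = S(B) be the Stone space of B (points are ultrafilters of B, with the sets s_B(a) = {u : a ∈ u} forming a closed base and open base), and define the relation R on X by u R v iff u × v ⊆ C (i.e. for all a ∈ u and b ∈ v, a C b). Then the Stone map s_B : B → CO(X) is a PCA-isomorphism from (B,C) onto the canonical precontact algebra (CO(X), C_R), where for clopen F, G one sets F C_R G iff there exist x ∈ F, y ∈ G with x R y. Moreover, C satisfies axiom (Cref) (respectively (Csym), (Ctr)) if and only if the relation R is reflexive (respectively symmetric, transitive). -/

import Mathlib

/-- A precontact relation on a Boolean algebra. -/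
def IsPrecontactRel {B : Type*} [BooleanAlgebra B] (C : B → B → Prop) : Prop :=
  (∀ a b : B, C a b → a ≠ ⊥ ∧ b ≠ ⊥) ∧
  (∀ a b c : B, C a (b ⊔ c) ↔ C a b ∨ C a c) ∧
  (∀ a b c : B, C (a ⊔ b) c ↔ C a c ∨ C b c)

/-- A (proper) filter of a Boolean algebra, as a set of its elements. -/
def IsBAFilter {B : Type*} [BooleanAlgebra B] (F : Set B) : Prop :=
  F.Nonempty ∧ ⊥ ∉ F ∧ (∀ a ∈ F, ∀ b : B, a ≤ b → b ∈ F) ∧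
    (∀ a ∈ F, ∀ b ∈ F, a ⊓ b ∈ F)

/-- An ultrafilter of a Boolean algebra: a maximal proper filter. -/
def IsBAUltrafilter {B : Type*} [BooleanAlgebra B] (U : Set B) : Prop :=
  IsBAFilter U ∧ ∀ V : Set B, IsBAFilter V → U ⊆ V → V = U

/-- The points of the Stone space of a Boolean algebra: its ultrafilters. -/
def StonePts (B : Type*) [BooleanAlgebra B] := {u : Set B // IsBAUltrafilter u}

/-- The Stone map `s_B`. -/
def stoneMap {B : Type*} [BooleanAlgebra B] (a : B) : Set (StonePts B) :=
  {u : StonePts B | a ∈ u.1}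

/-- The Stone topology: the sets `s_B a` form an open base (and a closed base). -/
instance stoneTop (B : Type*) [BooleanAlgebra B] : TopologicalSpace (StonePts B) :=
  TopologicalSpace.generateFrom {U : Set (StonePts B) | ∃ a : B, U = stoneMap a}

/-- The canonical adjacency relation `R_(B,C)` between ultrafilters. -/
def stoneR {B : Type*} [BooleanAlgebra B] (C : B → B → Prop)
    (u v : StonePts B) : Prop :=
  ∀ a ∈ u.1, ∀ b ∈ v.1, C a b

/-- The precontact relation induced by a relation `R` on the points of a space,
restricted here to arbitrary sets of points. -/
def PtC {W : Type*} (R : W → W → Prop) (M N : Set W) : Prop :=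
  ∃ x ∈ M, ∃ y ∈ N, R x y

/-- The non-tangential inclusion `≪_C`. -/
def Ltc {B : Type*} [BooleanAlgebra B] (C : B → B → Prop) (a b : B) : Prop :=
  ¬ C a bᶜ

/-- Axiom (Ctr). -/
def SatisfiesCtr {B : Type*} [BooleanAlgebra B] (C : B → B → Prop) : Prop :=
  ∀ a c : B, Ltc C a c → ∃ b : B, Ltc C a b ∧ Ltc C b c

section Aux

variable {B : Type*} [BooleanAlgebra B] {C : B → B → Prop}

/-- An ideal of a Boolean algebra, as a set of its elements. -/
def IsBAIdeal (G : Set B) : Prop :=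
  ⊥ ∈ G ∧ (∀ a ∈ G, ∀ b : B, b ≤ a → b ∈ G) ∧ (∀ a ∈ G, ∀ b ∈ G, a ⊔ b ∈ G)

lemma baFilter_top_mem {F : Set B} (hF : IsBAFilter F) : (⊤ : B) ∈ F := by
  obtain ⟨⟨a, ha⟩, -, hup, -⟩ := hF
  exact hup a ha ⊤ le_top

lemma baFilter_not_compl {F : Set B} (hF : IsBAFilter F) {a : B}
    (h1 : a ∈ F) (h2 : aᶜ ∈ F) : False := by
  have := hF.2.2.2 a h1 aᶜ h2
  rw [inf_compl_eq_bot] at this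
  exact hF.2.1 this

/-- Master lemma: a filter disjoint from an ideal extends to an ultrafilter disjoint
from the ideal. -/
lemma exists_ultra_of_disjoint {E G : Set B} (hE : IsBAFilter E) (hG : IsBAIdeal G)
    (hd : ∀ x ∈ E, x ∉ G) :
    ∃ u : Set B, IsBAUltrafilter u ∧ E ⊆ u ∧ ∀ x ∈ u, x ∉ G := by
  set S : Set (Set B) := {V | IsBAFilter V ∧ ∀ x ∈ V, x ∉ G} with hS
  have hchain : ∀ c ⊆ S, IsChain (· ⊆ ·) c → c.Nonempty → ∃ ub ∈ S, ∀ s ∈ c, s ⊆ ub := by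
    intro c hcS hchain ⟨V₀, hV₀⟩
    refine ⟨⋃₀ c, ⟨⟨?_, ?_, ?_, ?_⟩, ?_⟩, fun s hs => Set.subset_sUnion_of_mem hs⟩
    · obtain ⟨x, hx⟩ := (hcS hV₀).1.1
      exact ⟨x, V₀, hV₀, hx⟩
    · rintro ⟨V, hV, hbot⟩
      exact (hcS hV).1.2.1 hbot
    · rintro a ⟨V, hV, ha⟩ b hab
      exact ⟨V, hV, (hcS hV).1.2.2.1 a ha b hab⟩
    · rintro a ⟨V, hV, ha⟩ b ⟨W, hW, hb⟩
      rcases hchain.total hV hW with hVW | hWV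
      · exact ⟨W, hW, (hcS hW).1.2.2.2 a (hVW ha) b hb⟩
      · exact ⟨V, hV, (hcS hV).1.2.2.2 a ha b (hWV hb)⟩
    · rintro x ⟨V, hV, hx⟩
      exact (hcS hV).2 x hx
  obtain ⟨M, hEM, hMmax⟩ := zorn_subset_nonempty S hchain E ⟨hE, hd⟩
  have hMS : M ∈ S := hMmax.1
  -- dichotomy helper
  have key : ∀ d : B, d ∉ M → ∃ x ∈ M, x ⊓ d ∈ G := by
    intro d hd'
    by_contra hnot
    push_neg at hnot
    set M' : Set B := {w | ∃ x ∈ M, x ⊓ d ≤ w} with hM'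
    have hMM' : M ⊆ M' := fun x hx => ⟨x, hx, inf_le_left⟩
    have hM'S : M' ∈ S := by
      refine ⟨⟨⟨d, ⊤, baFilter_top_mem hMS.1, by simp⟩, ?_, ?_, ?_⟩, ?_⟩
      · rintro ⟨x, hx, hle⟩
        exact hnot x hx (le_bot_iff.1 hle ▸ hG.1)
      · rintro a ⟨x, hx, hle⟩ b hab
        exact ⟨x, hx, hle.trans hab⟩
      · rintro a ⟨x, hx, hle⟩ b ⟨y, hy, hle'⟩
        refine ⟨x ⊓ y, hMS.1.2.2.2 x hx y hy, le_inf ?_ ?_⟩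
        · exact le_trans (inf_le_inf_right d inf_le_left) hle
        · exact le_trans (inf_le_inf_right d inf_le_right) hle'
      · rintro w ⟨x, hx, hle⟩ hwG
        exact hnot x hx (hG.2.1 w hwG _ hle)
    have : M' ⊆ M := hMmax.2 hM'S hMM'
    exact hd' (this ⟨⊤, baFilter_top_mem hMS.1, by simp⟩)
  have hdich : ∀ d : B, d ∈ M ∨ dᶜ ∈ M := by
    intro d
    by_contra hcon
    push_neg at hcon
    obtain ⟨x, hx, hxG⟩ := key d hcon.1
    obtain ⟨y, hy, hyG⟩ := key dᶜ hcon.2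
    have hz : x ⊓ y ∈ M := hMS.1.2.2.2 x hx y hy
    have h1 : (x ⊓ y) ⊓ d ∈ G := hG.2.1 _ hxG _ (inf_le_inf_right d inf_le_left)
    have h2 : (x ⊓ y) ⊓ dᶜ ∈ G := hG.2.1 _ hyG _ (inf_le_inf_right dᶜ inf_le_right)
    have h3 : ((x ⊓ y) ⊓ d) ⊔ ((x ⊓ y) ⊓ dᶜ) = x ⊓ y := by
      rw [← inf_sup_left, sup_compl_eq_top, inf_top_eq]
    have : x ⊓ y ∈ G := h3 ▸ hG.2.2 _ h1 _ h2
    exact hMS.2 _ hz this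
  refine ⟨M, ⟨hMS.1, ?_⟩, hEM, hMS.2⟩
  intro V hV hMV
  refine Set.Subset.antisymm (fun w hw => ?_) hMV
  rcases hdich w with hwM | hwM
  · exact hwM
  · exact absurd (hV.2.2.2 w hw wᶜ (hMV hwM)) (by rw [inf_compl_eq_bot]; exact hV.2.1)

lemma ultra_dichotomy {u : Set B} (hu : IsBAUltrafilter u) (d : B) : d ∈ u ∨ dᶜ ∈ u := by
  by_contra hcon
  push_neg at hcon
  by_cases hb : ∃ x ∈ u, x ⊓ d = ⊥
  · obtain ⟨x, hx, hxd⟩ := hb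
    have : x ≤ dᶜ := le_compl_iff_disjoint_right.2 (disjoint_iff.2 hxd)
    exact hcon.2 (hu.1.2.2.1 x hx dᶜ this)
  · push_neg at hb
    set V : Set B := {w | ∃ x ∈ u, x ⊓ d ≤ w} with hV
    have hVf : IsBAFilter V := by
      refine ⟨⟨d, ⊤, baFilter_top_mem hu.1, by simp⟩, ?_, ?_, ?_⟩
      · rintro ⟨x, hx, hle⟩
        exact hb x hx (le_bot_iff.1 hle)
      · rintro a ⟨x, hx, hle⟩ b hab
        exact ⟨x, hx, hle.trans hab⟩
      · rintro a ⟨x, hx, hle⟩ b ⟨y, hy, hle'⟩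
        refine ⟨x ⊓ y, hu.1.2.2.2 x hx y hy, le_inf ?_ ?_⟩
        · exact le_trans (inf_le_inf_right d inf_le_left) hle
        · exact le_trans (inf_le_inf_right d inf_le_right) hle'
    have huV : u ⊆ V := fun x hx => ⟨x, hx, inf_le_left⟩
    have : V = u := hu.2 V hVf huV
    exact hcon.1 (this ▸ ⟨⊤, baFilter_top_mem hu.1, by simp⟩)

lemma ultra_compl_iff {u : Set B} (hu : IsBAUltrafilter u) {a : B} :
    aᶜ ∈ u ↔ a ∉ u := by
  constructor
  · intro h ha
    exact baFilter_not_compl hu.1 ha h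
  · intro ha
    rcases ultra_dichotomy hu a with h | h
    · exact absurd h ha
    · exact h

lemma ultra_sup_iff {u : Set B} (hu : IsBAUltrafilter u) {a b : B} :
    a ⊔ b ∈ u ↔ a ∈ u ∨ b ∈ u := by
  constructor
  · intro hab
    by_contra hcon
    push_neg at hcon
    have h1 : aᶜ ∈ u := (ultra_compl_iff hu).2 hcon.1
    have h2 : bᶜ ∈ u := (ultra_compl_iff hu).2 hcon.2
    have : aᶜ ⊓ bᶜ ∈ u := hu.1.2.2.2 _ h1 _ h2
    rw [← compl_sup] at this
    exact baFilter_not_compl hu.1 hab this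
  · rintro (ha | hb)
    · exact hu.1.2.2.1 a ha _ le_sup_left
    · exact hu.1.2.2.1 b hb _ le_sup_right

lemma C_mono (h : IsPrecontactRel C) {a a' b b' : B} (ha : a ≤ a') (hb : b ≤ b')
    (hC : C a b) : C a' b' := by
  have h1 : C a' b := by
    have := (h.2.2 a a' b).2 (Or.inl hC)
    rwa [sup_eq_right.2 ha] at this
  have := (h.2.1 a' b b').2 (Or.inl h1)
  rwa [sup_eq_right.2 hb] at this

lemma principal_filter {a : B} (ha : a ≠ ⊥) : IsBAFilter {x : B | a ≤ x} :=
  ⟨⟨a, le_refl a⟩, fun hle => ha (le_bot_iff.1 hle), fun _ hx b hb => hx.trans hb,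
    fun _ hx _ hy => le_inf hx hy⟩

lemma trivial_ideal : IsBAIdeal ({⊥} : Set B) := by
  refine ⟨rfl, ?_, ?_⟩
  · intro a ha b hb
    rw [Set.mem_singleton_iff] at ha ⊢
    exact le_bot_iff.1 (ha ▸ hb)
  · intro a ha b hb
    rw [Set.mem_singleton_iff] at ha hb ⊢
    rw [ha, hb, sup_idem]

lemma exists_ultra_mem {a : B} (ha : a ≠ ⊥) : ∃ u : Set B, IsBAUltrafilter u ∧ a ∈ u := by
  obtain ⟨u, hu, hEu, -⟩ := exists_ultra_of_disjoint (principal_filter ha) trivial_ideal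
    (fun x hx hxG => ha (le_bot_iff.1 (Set.mem_singleton_iff.1 hxG ▸ hx)))
  exact ⟨u, hu, hEu (le_refl a)⟩

/-- `{x | ¬ C x c}` is an ideal. -/
lemma ideal_notC_right (h : IsPrecontactRel C) (c : B) : IsBAIdeal {x : B | ¬ C x c} := by
  refine ⟨fun hC => (h.1 _ _ hC).1 rfl, ?_, ?_⟩
  · intro a ha b hb hC
    exact ha (C_mono h hb le_rfl hC)
  · intro a ha b hb hC
    rcases (h.2.2 a b c).1 hC with h' | h'
    · exact ha h'
    · exact hb h'

/-- For an ultrafilter `u`, `{y | ∃ x ∈ u, ¬ C x y}` is an ideal. -/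
lemma ideal_fiber_right (h : IsPrecontactRel C) {u : Set B} (hu : IsBAUltrafilter u) :
    IsBAIdeal {y : B | ∃ x ∈ u, ¬ C x y} := by
  refine ⟨⟨⊤, baFilter_top_mem hu.1, fun hC => (h.1 _ _ hC).2 rfl⟩, ?_, ?_⟩
  · rintro a ⟨x, hx, hxa⟩ b hb
    exact ⟨x, hx, fun hC => hxa (C_mono h le_rfl hb hC)⟩
  · rintro a ⟨x, hx, hxa⟩ b ⟨y, hy, hyb⟩
    refine ⟨x ⊓ y, hu.1.2.2.2 x hx y hy, fun hC => ?_⟩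
    rcases (h.2.1 (x ⊓ y) a b).1 hC with h' | h'
    · exact hxa (C_mono h inf_le_left le_rfl h')
    · exact hyb (C_mono h inf_le_right le_rfl h')

/-- For an ultrafilter `v`, `{x | ∃ y ∈ v, ¬ C x y}` is an ideal. -/
lemma ideal_fiber_left (h : IsPrecontactRel C) {v : Set B} (hv : IsBAUltrafilter v) :
    IsBAIdeal {x : B | ∃ y ∈ v, ¬ C x y} := by
  refine ⟨⟨⊤, baFilter_top_mem hv.1, fun hC => (h.1 _ _ hC).1 rfl⟩, ?_, ?_⟩
  · rintro a ⟨y, hy, hya⟩ b hb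
    exact ⟨y, hy, fun hC => hya (C_mono h hb le_rfl hC)⟩
  · rintro a ⟨y, hy, hya⟩ b ⟨z, hz, hzb⟩
    refine ⟨y ⊓ z, hv.1.2.2.2 y hy z hz, fun hC => ?_⟩
    rcases (h.2.2 a b (y ⊓ z)).1 hC with h' | h'
    · exact hya (C_mono h le_rfl inf_le_left h')
    · exact hzb (C_mono h le_rfl inf_le_right h')

/-- Given `C a b`, there is an ultrafilter `u ∋ a` with `C x b` for all `x ∈ u`. -/
lemma exists_ultra_C_left (h : IsPrecontactRel C) {a b : B} (hab : C a b) :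
    ∃ u : Set B, IsBAUltrafilter u ∧ a ∈ u ∧ ∀ x ∈ u, C x b := by
  have ha : a ≠ ⊥ := (h.1 _ _ hab).1
  obtain ⟨u, hu, hEu, hdis⟩ := exists_ultra_of_disjoint (principal_filter ha)
    (ideal_notC_right h b) (fun x hx hxG => hxG (C_mono h hx le_rfl hab))
  refine ⟨u, hu, hEu (le_refl a), fun x hx => ?_⟩
  by_contra hC
  exact hdis x hx hC

/-- Given an ultrafilter `u` with `C x b` for all `x ∈ u`, there is an ultrafilter
`v ∋ b` with `u × v ⊆ C`. -/
lemma exists_ultra_C_right (h : IsPrecontactRel C) {u : Set B} (hu : IsBAUltrafilter u)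
    {b : B} (hb : ∀ x ∈ u, C x b) :
    ∃ v : Set B, IsBAUltrafilter v ∧ b ∈ v ∧ ∀ x ∈ u, ∀ y ∈ v, C x y := by
  have hbne : b ≠ ⊥ := (h.1 ⊤ b (hb ⊤ (baFilter_top_mem hu.1))).2
  have hd : ∀ y ∈ {x : B | b ≤ x}, y ∉ {y : B | ∃ x ∈ u, ¬ C x y} := by
    rintro y hy ⟨x, hx, hxy⟩
    exact hxy (C_mono h le_rfl hy (hb x hx))
  obtain ⟨v, hv, hEv, hdis⟩ := exists_ultra_of_disjoint (principal_filter hbne)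
    (ideal_fiber_right h hu) hd
  refine ⟨v, hv, hEv (le_refl b), fun x hx y hy => ?_⟩
  by_contra hC
  exact hdis y hy ⟨x, hx, hC⟩

/-- Given an ultrafilter `v` with `C a y` for all `y ∈ v`, there is an ultrafilter
`u ∋ a` with `u × v ⊆ C`. -/
lemma exists_ultra_C_left' (h : IsPrecontactRel C) {v : Set B} (hv : IsBAUltrafilter v)
    {a : B} (ha : ∀ y ∈ v, C a y) :
    ∃ u : Set B, IsBAUltrafilter u ∧ a ∈ u ∧ ∀ x ∈ u, ∀ y ∈ v, C x y := by
  have hane : a ≠ ⊥ := (h.1 a ⊤ (ha ⊤ (baFilter_top_mem hv.1))).1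
  have hd : ∀ x ∈ {x : B | a ≤ x}, x ∉ {x : B | ∃ y ∈ v, ¬ C x y} := by
    rintro x hx ⟨y, hy, hxy⟩
    exact hxy (C_mono h hx le_rfl (ha y hy))
  obtain ⟨u, hu, hEu, hdis⟩ := exists_ultra_of_disjoint (principal_filter hane)
    (ideal_fiber_left h hv) hd
  refine ⟨u, hu, hEu (le_refl a), fun x hx y hy => ?_⟩
  by_contra hC
  exact hdis x hx ⟨y, hy, hC⟩

-- topology lemmas

lemma stoneMap_compl (a : B) : stoneMap aᶜ = (stoneMap a)ᶜ := by
  ext u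
  exact ultra_compl_iff u.2

lemma stoneMap_sup (a b : B) : stoneMap (a ⊔ b) = stoneMap a ∪ stoneMap b := by
  ext u
  exact ultra_sup_iff u.2

lemma stoneMap_inf (a b : B) : stoneMap (a ⊓ b) = stoneMap a ∩ stoneMap b := by
  ext u
  constructor
  · intro hab
    exact ⟨u.2.1.2.2.1 _ hab a inf_le_left, u.2.1.2.2.1 _ hab b inf_le_right⟩
  · rintro ⟨ha, hb⟩
    exact u.2.1.2.2.2 a ha b hb

lemma stoneMap_bot : stoneMap (⊥ : B) = ∅ := by
  ext u
  exact ⟨fun hb => u.2.1.2.1 hb, fun h => h.elim⟩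

lemma stoneMap_top : stoneMap (⊤ : B) = Set.univ := by
  ext u
  exact ⟨fun _ => trivial, fun _ => baFilter_top_mem u.2.1⟩

lemma stoneMap_isOpen (a : B) : IsOpen (stoneMap a) :=
  TopologicalSpace.isOpen_generateFrom_of_mem ⟨a, rfl⟩

lemma stoneMap_isClopen (a : B) : IsClopen (stoneMap a) := by
  constructor
  · rw [← isOpen_compl_iff, ← stoneMap_compl]
    exact stoneMap_isOpen aᶜ
  · exact stoneMap_isOpen a

lemma stoneMap_le_iff {a b : B} : stoneMap a ⊆ stoneMap b ↔ a ≤ b := by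
  constructor
  · intro hsub
    by_contra hle
    have hne : a ⊓ bᶜ ≠ ⊥ := by
      intro hbot
      exact hle (sdiff_eq_bot_iff.1 (by rw [sdiff_eq]; exact hbot))
    obtain ⟨u, hu, hmem⟩ := exists_ultra_mem hne
    have ha : a ∈ u := hu.1.2.2.1 _ hmem a inf_le_left
    have hbc : bᶜ ∈ u := hu.1.2.2.1 _ hmem bᶜ inf_le_right
    have hb : b ∈ u := hsub (show (⟨u, hu⟩ : StonePts B) ∈ stoneMap a from ha)
    exact baFilter_not_compl hu.1 hb hbc
  · intro hab u ha
    exact u.2.1.2.2.1 a ha b hab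

lemma stoneMap_injective : Function.Injective (stoneMap (B := B)) := by
  intro a b hab
  exact le_antisymm (stoneMap_le_iff.1 hab.le) (stoneMap_le_iff.1 hab.ge)

lemma stone_basis :
    TopologicalSpace.IsTopologicalBasis {U : Set (StonePts B) | ∃ a : B, U = stoneMap a} := by
  refine ⟨?_, ?_, rfl⟩
  · rintro t₁ ⟨a, rfl⟩ t₂ ⟨b, rfl⟩ x hx
    exact ⟨stoneMap (a ⊓ b), ⟨a ⊓ b, rfl⟩, by rwa [stoneMap_inf], by rw [stoneMap_inf]⟩
  · apply Set.eq_univ_of_univ_subset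
    intro x _
    exact ⟨stoneMap ⊤, ⟨⊤, rfl⟩, by rw [stoneMap_top]; trivial⟩

lemma ultra_finsetSup_mem {u : Set B} (hu : IsBAUltrafilter u) {ι : Type*}
    (s : Finset ι) (f : ι → B) (hs : s.sup f ∈ u) : ∃ i ∈ s, f i ∈ u := by
  induction s using Finset.cons_induction with
  | empty =>
    rw [Finset.sup_empty] at hs
    exact absurd hs hu.1.2.1
  | cons i s' hi ih =>
    rw [Finset.sup_cons] at hs
    rcases (ultra_sup_iff hu).1 hs with h' | h'
    · exact ⟨i, Finset.mem_cons_self i s', h'⟩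
    · obtain ⟨j, hj, hfj⟩ := ih h'
      exact ⟨j, Finset.mem_cons_of_mem hj, hfj⟩

lemma stoneMap_finsetSup {ι : Type*} (s : Finset ι) (f : ι → B) :
    stoneMap (s.sup f) = ⋃ i ∈ s, stoneMap (f i) := by
  induction s using Finset.cons_induction with
  | empty => simp [stoneMap_bot]
  | cons i s' hi ih =>
    rw [Finset.sup_cons, stoneMap_sup, ih]
    simp

lemma stone_compact : IsCompact (Set.univ : Set (StonePts B)) := by
  classical
  apply isCompact_of_finite_subcover
  intro ι U hUo hcov
  have hx : ∀ x : StonePts B, ∃ (p : ι × B), x ∈ stoneMap p.2 ∧ stoneMap p.2 ⊆ U p.1 := by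
    intro x
    obtain ⟨i, hi⟩ := Set.mem_iUnion.1 (hcov (Set.mem_univ x))
    obtain ⟨t, ⟨a, rfl⟩, hxt, htU⟩ := stone_basis.exists_subset_of_mem_open hi (hUo i)
    exact ⟨(i, a), hxt, htU⟩
  choose p hp1 hp2 using hx
  by_cases hG : ∃ s : Finset (StonePts B), (⊤ : B) ≤ s.sup (fun x => (p x).2)
  · obtain ⟨s, hs⟩ := hG
    refine ⟨s.image (fun x => (p x).1), fun x _ => ?_⟩
    have hsup : s.sup (fun x => (p x).2) ∈ x.1 :=
      x.2.1.2.2.1 ⊤ (baFilter_top_mem x.2.1) _ hs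
    obtain ⟨y, hy, hgy⟩ := ultra_finsetSup_mem x.2 s _ hsup
    refine Set.mem_biUnion (Finset.mem_image_of_mem _ hy) (hp2 y hgy)
  · push_neg at hG
    exfalso
    set G : Set B := {b | ∃ s : Finset (StonePts B), b ≤ s.sup (fun x => (p x).2)} with hGdef
    have hGideal : IsBAIdeal G := by
      refine ⟨⟨∅, bot_le⟩, ?_, ?_⟩
      · rintro a ⟨s, hs⟩ b hb
        exact ⟨s, hb.trans hs⟩
      · rintro a ⟨s, hs⟩ b ⟨s', hs'⟩
        refine ⟨s ∪ s', sup_le (hs.trans (Finset.sup_mono Finset.subset_union_left))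
          (hs'.trans (Finset.sup_mono Finset.subset_union_right))⟩
    have htne : (⊤ : B) ≠ ⊥ := by
      intro hbot
      exact hG ∅ (by rw [Finset.sup_empty, ← hbot])
    obtain ⟨u, hu, hEu, hdis⟩ := exists_ultra_of_disjoint (principal_filter htne) hGideal
      (fun x hx ⟨s, hs⟩ => hG s (hx.trans hs))
    exact hdis _ (hp1 ⟨u, hu⟩) ⟨{⟨u, hu⟩}, Finset.le_sup (f := fun x => (p x).2) (Finset.mem_singleton_self _)⟩

lemma stone_clopen_eq {U : Set (StonePts B)} (hU : IsClopen U) : ∃ a : B, U = stoneMap a := by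
  classical
  have hx : ∀ x : U, ∃ a : B, (x : StonePts B) ∈ stoneMap a ∧ stoneMap a ⊆ U := by
    intro x
    obtain ⟨t, ⟨a, rfl⟩, hxt, htU⟩ := stone_basis.exists_subset_of_mem_open x.2 hU.2
    exact ⟨a, hxt, htU⟩
  choose f hf1 hf2 using hx
  have hcompact : IsCompact U :=
    IsCompact.of_isClosed_subset stone_compact hU.1 (Set.subset_univ U)
  have hcover : U ⊆ ⋃ x : U, stoneMap (f x) := fun y hy =>
    Set.mem_iUnion.2 ⟨⟨y, hy⟩, hf1 ⟨y, hy⟩⟩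
  obtain ⟨s, hs⟩ := hcompact.elim_finite_subcover (fun x : U => stoneMap (f x))
    (fun x => stoneMap_isOpen (f x)) hcover
  refine ⟨s.sup f, Set.Subset.antisymm ?_ ?_⟩
  · rw [stoneMap_finsetSup]
    exact hs
  · rw [stoneMap_finsetSup]
    exact Set.iUnion₂_subset fun x _ => hf2 x

end Aux

theorem stmt6 {B : Type*} [BooleanAlgebra B] {C : B → B → Prop}
    (h : IsPrecontactRel C) :
    -- the Stone map is a Boolean isomorphism onto the clopen algebra of `S(B)`
    (∀ a : B, IsClopen (stoneMap a)) ∧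
    Function.Injective (stoneMap (B := B)) ∧
    (∀ U : Set (StonePts B), IsClopen U → ∃ a : B, U = stoneMap a) ∧
    (∀ a b : B, stoneMap (a ⊔ b) = stoneMap a ∪ stoneMap b) ∧
    (∀ a b : B, stoneMap (a ⊓ b) = stoneMap a ∩ stoneMap b) ∧
    (∀ a : B, stoneMap aᶜ = (stoneMap a)ᶜ) ∧
    (stoneMap (⊥ : B) = ∅) ∧ (stoneMap (⊤ : B) = Set.univ) ∧
    -- it is a PCA-isomorphism onto `(CO(S(B)), C_R)`
    (∀ a b : B, C a b ↔ PtC (stoneR C) (stoneMap a) (stoneMap b)) ∧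
    -- (Cref)/(Csym)/(Ctr) correspond to reflexivity/symmetry/transitivity of `R`
    ((∀ a : B, a ≠ ⊥ → C a a) ↔ Reflexive (stoneR C)) ∧
    ((∀ a b : B, C a b → C b a) ↔ Symmetric (stoneR C)) ∧
    (SatisfiesCtr C ↔ Transitive (stoneR C)) := by
  have hPtC : ∀ a b : B, C a b ↔ PtC (stoneR C) (stoneMap a) (stoneMap b) := by
    intro a b
    constructor
    · intro hab
      obtain ⟨u, hu, hau, hub⟩ := exists_ultra_C_left h hab
      obtain ⟨v, hv, hbv, huv⟩ := exists_ultra_C_right h hu hub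
      exact ⟨⟨u, hu⟩, hau, ⟨v, hv⟩, hbv, fun x hx y hy => huv x hx y hy⟩
    · rintro ⟨u, hau, v, hbv, huv⟩
      exact huv a hau b hbv
  refine ⟨stoneMap_isClopen, stoneMap_injective, fun U hU => stone_clopen_eq hU,
    stoneMap_sup, stoneMap_inf, stoneMap_compl, stoneMap_bot, stoneMap_top, hPtC, ?_, ?_, ?_⟩
  · -- (Cref)
    constructor
    · intro href u
      intro a ha b hb
      have hab : a ⊓ b ∈ u.1 := u.2.1.2.2.2 a ha b hb
      have hne : a ⊓ b ≠ ⊥ := fun hbot => u.2.1.2.1 (hbot ▸ hab)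
      exact C_mono h inf_le_left inf_le_right (href _ hne)
    · intro hrefl a ha
      obtain ⟨u, hu, hau⟩ := exists_ultra_mem ha
      exact hrefl ⟨u, hu⟩ a hau a hau
  · -- (Csym)
    constructor
    · intro hsym u v huv a ha b hb
      exact hsym b a (huv b hb a ha)
    · intro hsym a b hab
      obtain ⟨u, hau, v, hbv, huv⟩ := (hPtC a b).1 hab
      exact hsym huv b hbv a hau
  · -- (Ctr)
    constructor
    · intro hctr u v w huv hvw a ha c hc
      by_contra hnc
      have hl : Ltc C a cᶜ := by rw [Ltc, compl_compl]; exact hnc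
      obtain ⟨b, h1, h2⟩ := hctr a cᶜ hl
      rw [Ltc, compl_compl] at h2
      rcases ultra_dichotomy v.2 b with hbv | hbv
      · exact h2 (hvw b hbv c hc)
      · exact h1 (huv a ha bᶜ hbv)
    · intro htrans a c hlt
      by_cases hCat : C a ⊤
      · by_contra hno
        push_neg at hno
        set E : Set B := {b | ¬ C a bᶜ} with hEdef
        have hEfilter : IsBAFilter E := by
          refine ⟨⟨⊤, ?_⟩, ?_, ?_, ?_⟩
          · show ¬ C a ⊤ᶜ
            rw [compl_top]
            exact fun hC => (h.1 _ _ hC).2 rfl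
          · show ¬ ¬ C a ⊥ᶜ
            rw [compl_bot]
            exact fun hC => hC hCat
          · intro x hx y hxy hC
            exact hx (C_mono h le_rfl (compl_le_compl hxy) hC)
          · intro x hx y hy hC
            rw [compl_inf] at hC
            rcases (h.2.1 a xᶜ yᶜ).1 hC with h' | h'
            · exact hx h'
            · exact hy h'
        have hGideal : IsBAIdeal {x : B | ¬ C x cᶜ} := ideal_notC_right h cᶜ
        have hdis : ∀ x ∈ E, x ∉ {x : B | ¬ C x cᶜ} := by
          intro b hb hbG
          exact (hno b hb) hbG
        obtain ⟨v, hv, hEv, hvdis⟩ := exists_ultra_of_disjoint hEfilter hGideal hdis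
        have hav : ∀ y ∈ v, C a y := by
          intro y hy
          by_contra hC
          have : yᶜ ∈ E := by
            show ¬ C a yᶜᶜ
            rwa [compl_compl]
          exact baFilter_not_compl hv.1 hy (hEv this)
        have hvc : ∀ y ∈ v, C y cᶜ := by
          intro y hy
          by_contra hC
          exact hvdis y hy hC
        obtain ⟨u, hu, hau, huv⟩ := exists_ultra_C_left' h hv hav
        obtain ⟨w, hw, hcw, hvw⟩ := exists_ultra_C_right h hv hvc
        have h1 : stoneR C ⟨u, hu⟩ ⟨v, hv⟩ := fun x hx y hy => huv x hx y hy
        have h2 : stoneR C ⟨v, hv⟩ ⟨w, hw⟩ := fun x hx y hy => hvw x hx y hy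
        exact hlt (htrans h1 h2 a hau cᶜ hcw)
      · refine ⟨⊥, ?_, ?_⟩
        · show ¬ C a ⊥ᶜ
          rwa [compl_bot]
        · show ¬ C ⊥ cᶜ
          exact fun hC => (h.1 _ _ hC).1 rfl
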